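/- Let A be a commutative ring, X a set, G a group of permutations of X, and ≤ a term ordering of X^⋄. Let f ∈ A[X] be nonzero and w a monomial. Suppose σ ∈ G witnesses lm(f) ⪯ w, i.e. lm(f) ≤ w, σ·lm(f) divides w, and σ·v' ≤ σ·lm(f) for every monomial v' ≤ lm(f); and let u be a monomial with u·σ·lm(f) = w. Then the leading monomial of the polynomial u·σ(f) equals u·σ·lm(f). -/

import Mathlib

/-- A quasi-ordering (here: any binary relation) `r` on `S` is a well-quasi-ordering if
every infinite sequence is good, i.e. there are `i < j` with `r (f i) (f j)`. -/
def IsWQO {S : Type*} (r : S → S → Prop) : Prop :=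
  ∀ f : ℕ → S, ∃ i j : ℕ, i < j ∧ r (f i) (f j)

/-- A term ordering of the monoid of monomials `X →₀ ℕ`: a linear order which is
well-founded, with `1 ≤ x` for every indeterminate `x`, and compatible with
multiplication by indeterminates. -/
def IsTermOrder {X : Type*} (r : (X →₀ ℕ) → (X →₀ ℕ) → Prop) : Prop :=
  IsLinearOrder (X →₀ ℕ) r ∧
  WellFounded (fun v w : X →₀ ℕ => r v w ∧ v ≠ w) ∧
  (∀ x : X, r 0 (Finsupp.single x 1)) ∧
  (∀ (v w : X →₀ ℕ) (x : X), r v w → r (Finsupp.single x 1 + v) (Finsupp.single x 1 + w))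

/-- The symmetric cancellation ordering corresponding to a permutation group `G` on `X`
and a term ordering `r` of the monomials `X →₀ ℕ`:  `v ⪯ w` iff `r v w` and there are
`σ ∈ G` and a monomial `u` with `w = u·σv` and `u·σv' ≤ w` for every `v' ≤ v`. -/
def SymCancel {X : Type*} (G : Subgroup (Equiv.Perm X))
    (r : (X →₀ ℕ) → (X →₀ ℕ) → Prop) (v w : X →₀ ℕ) : Prop :=
  r v w ∧ ∃ σ : Equiv.Perm X, σ ∈ G ∧ ∃ u : X →₀ ℕ,
    w = u + Finsupp.mapDomain (⇑σ) v ∧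
    ∀ v' : X →₀ ℕ, r v' v → r (u + Finsupp.mapDomain (⇑σ) v') w

/-- The lexicographic ordering of monomials induced by a linear order on `X`:
`v ≤lex w` iff `v = w` or there is `x` with `v x < w x` and `v y = w y` for all `y > x`. -/
def LexLe {X : Type*} [LinearOrder X] (v w : X →₀ ℕ) : Prop :=
  v = w ∨ ∃ x : X, v x < w x ∧ ∀ y : X, x < y → v y = w y

/-- Let `f ∈ A[X]` be nonzero with leading monomial `v = lm f` (with
respect to a term ordering `r`), let `σ ∈ G` witness `lm f ⪯ w`, i.e. `r (lm f) w`,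
`σ·lm f ∣ w` and `σ v' ≤ σ (lm f)` for all `v' ≤ lm f`, and let `u` be a monomial with
`u·σ·lm f = w`.  Then the leading monomial of `u·σ(f)` is `u·σ·lm f`. -/
lemma termorder_single_add_left {X : Type*} {r : (X →₀ ℕ) → (X →₀ ℕ) → Prop}
    (hr : IsTermOrder r) (x : X) (n : ℕ) {a b : X →₀ ℕ} (h : r a b) :
    r (Finsupp.single x n + a) (Finsupp.single x n + b) := by
  induction n with
  | zero => simpa using h
  | succ k ihk =>
    have e : Finsupp.single x (k+1) = Finsupp.single x 1 + Finsupp.single x k := by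
      rw [← Finsupp.single_add, add_comm]
    rw [e, add_assoc, add_assoc]
    exact hr.2.2.2 _ _ x ihk

lemma termorder_add_left {X : Type*} {r : (X →₀ ℕ) → (X →₀ ℕ) → Prop}
    (hr : IsTermOrder r) (u : X →₀ ℕ) {a b : X →₀ ℕ} (h : r a b) :
    r (u + a) (u + b) := by
  induction u using Finsupp.induction with
  | zero => simpa using h
  | single_add x n g _ _ ih =>
    rw [add_assoc, add_assoc]
    exact termorder_single_add_left hr x n ih

theorem stmt6 {A : Type*} [CommRing A] {X : Type*}
    (G : Subgroup (Equiv.Perm X))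
    (r : (X →₀ ℕ) → (X →₀ ℕ) → Prop) (hr : IsTermOrder r)
    (f : MvPolynomial X A) (hf : f ≠ 0) (w : X →₀ ℕ)
    (v : X →₀ ℕ) (hv : v ∈ f.support) (hvmax : ∀ m ∈ f.support, r m v)
    (σ : Equiv.Perm X) (hσG : σ ∈ G)
    (hrvw : r v w)
    (hwit : ∀ v' : X →₀ ℕ, r v' v →
      r (Finsupp.mapDomain (⇑σ) v') (Finsupp.mapDomain (⇑σ) v))
    (u : X →₀ ℕ) (hu : w = u + Finsupp.mapDomain (⇑σ) v) :
    (u + Finsupp.mapDomain (⇑σ) v) ∈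
        (MvPolynomial.monomial u (1 : A) * MvPolynomial.rename (⇑σ) f).support ∧
      ∀ m ∈ (MvPolynomial.monomial u (1 : A) * MvPolynomial.rename (⇑σ) f).support,
        r m (u + Finsupp.mapDomain (⇑σ) v) := by
  classical
  have hσ : Function.Injective (⇑σ) := σ.injective
  constructor
  · rw [MvPolynomial.mem_support_iff, MvPolynomial.coeff_monomial_mul,
      MvPolynomial.coeff_rename_mapDomain _ hσ, one_mul]
    exact MvPolynomial.mem_support_iff.mp hv
  · intro m hm
    have := MvPolynomial.support_mul _ _ hm
    rw [Finset.mem_add] at this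
    obtain ⟨a, ha, b, hb, rfl⟩ := this
    have ha' : a = u := by
      have := MvPolynomial.support_monomial_subset ha
      simpa using this
    rw [MvPolynomial.support_rename_of_injective hσ, Finset.mem_image] at hb
    obtain ⟨v', hv', rfl⟩ := hb
    rw [ha']
    exact termorder_add_left hr u (hwit v' (hvmax v' hv'))
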